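/- Let B be an integral domain containing a field k of characteristic zero, and let D be a nonzero locally nilpotent derivation of B. Suppose there exists a nonzero locally nilpotent derivation E of B with DE = ED and ker(D) ≠ ker(E). Then ker(D) is non-rigid: there exists a nonzero locally nilpotent derivation of the ring ker(D). In fact, the restriction of E to ker(D) is such a derivation. -/

import Mathlib

variable {k B : Type*} [Field k] [CharZero k] [CommRing B] [IsDomain B] [Algebra k B]

/-- A derivation is locally nilpotent if every element is killed by some iterate. -/
def IsLocallyNilpotentDeriv {R A : Type*} [CommRing R] [CommRing A] [Algebra R A]
    (D : Derivation R A A) : Prop :=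
  ∀ x : A, ∃ n : ℕ, (⇑D)^[n] x = 0

/-- The kernel of a derivation, as a subalgebra. -/
def Derivation.kerSubalgebra {R A : Type*} [CommRing R] [CommRing A] [Algebra R A]
    (D : Derivation R A A) : Subalgebra R A where
  carrier := {b | D b = 0}
  mul_mem' := by
    intro a b ha hb
    simp only [Set.mem_setOf_eq] at *
    rw [D.leibniz]
    simp [ha, hb]
  add_mem' := by
    intro a b ha hb
    simp only [Set.mem_setOf_eq] at *
    simp [ha, hb]
  algebraMap_mem' := by intro r; simp [Set.mem_setOf_eq]

section Aux

set_option linter.unusedSectionVars false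

variable (D E : Derivation k B B) (s b : B)

/-- Auxiliary operator `T m x = m • (s*x) - b * D x`. -/
def Taux (m : ℕ) (x : B) : B := m • (s * x) - b * D x

/-- Iterated composition `R n = T 1 ∘ T 2 ∘ ⋯ ∘ T n`. -/
def Raux : ℕ → B → B
  | 0 => id
  | n+1 => fun x => Raux n (Taux D s b (n+1) x)

lemma Dnat (m : ℕ) : D ((m : ℕ) : B) = 0 := by
  rw [show ((m : ℕ) : B) = algebraMap k B (m : k) by push_cast; ring]
  exact D.map_algebraMap (m : k)

lemma Taux_D (hDs : D s = 0) (hDb : D b = s) (m : ℕ) (x : B) :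
    D (Taux D s b (m+1) x) = Taux D s b m (D x) := by
  simp only [Taux, nsmul_eq_mul, map_sub, Derivation.leibniz, smul_eq_mul, hDs, hDb,
    Dnat, mul_zero, zero_mul, add_zero, zero_add]
  push_cast
  ring

lemma Taux_E (hEs : E s = 0) (hEb : E b = 0)
    (hcomm : ∀ y : B, D (E y) = E (D y)) (m : ℕ) (x : B) :
    E (Taux D s b m x) = Taux D s b m (E x) := by
  simp only [Taux, nsmul_eq_mul, map_sub, Derivation.leibniz, smul_eq_mul, hEs, hEb,
    Dnat, mul_zero, zero_mul, add_zero, zero_add, ← hcomm]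

lemma Taux_iter (hDs : D s = 0) (hDb : D b = s) :
    ∀ (n m : ℕ) (x : B), D^[n] (Taux D s b (m+n) x) = Taux D s b m (D^[n] x) := by
  intro n
  induction n with
  | zero => intro m x; simp
  | succ n ih =>
    intro m x
    rw [Function.iterate_succ_apply, Function.iterate_succ_apply,
      show m + (n+1) = (m+n)+1 from rfl, Taux_D D s b hDs hDb (m+n) x, ih m (D x)]

lemma Raux_E (hEs : E s = 0) (hEb : E b = 0)
    (hcomm : ∀ y : B, D (E y) = E (D y)) :
    ∀ (n : ℕ) (x : B), E (Raux D s b n x) = Raux D s b n (E x) := by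
  intro n
  induction n with
  | zero => intro x; rfl
  | succ n ih =>
    intro x
    show E (Raux D s b n (Taux D s b (n+1) x)) = Raux D s b n (Taux D s b (n+1) (E x))
    rw [ih, Taux_E D E s b hEs hEb hcomm]

lemma Raux_D (hDs : D s = 0) (hDb : D b = s) :
    ∀ (n : ℕ) (x : B), D^[n+1] x = 0 → D (Raux D s b n x) = 0 := by
  intro n
  induction n with
  | zero => intro x hx; show D x = 0; simpa using hx
  | succ n ih =>
    intro x hx
    show D (Raux D s b n (Taux D s b (n+1) x)) = 0
    apply ih
    have h := Taux_iter D s b hDs hDb (n+1) 0 x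
    rw [Nat.zero_add] at h
    rw [h]
    simp only [Taux, zero_nsmul, zero_smul, zero_sub, neg_eq_zero]
    rw [← Function.iterate_succ_apply' D (n+1) x, hx, mul_zero]

lemma Taux_nsmul (m c : ℕ) (x : B) :
    Taux D s b m (c • x) = c • Taux D s b m x := by
  simp only [Taux, nsmul_eq_mul, map_sub]
  rw [show ((c : ℕ) : B) * x = ((c : ℕ) : B) * x from rfl]
  have : D (((c : ℕ) : B) * x) = ((c : ℕ) : B) * D x := by
    rw [Derivation.leibniz, smul_eq_mul, smul_eq_mul, Dnat, mul_zero, add_zero]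
  rw [this]
  ring

lemma Raux_nsmul : ∀ (n c : ℕ) (x : B),
    Raux D s b n (c • x) = c • Raux D s b n x := by
  intro n
  induction n with
  | zero => intro c x; rfl
  | succ n ih =>
    intro c x
    show Raux D s b n (Taux D s b (n+1) (c • x)) = c • Raux D s b n (Taux D s b (n+1) x)
    rw [Taux_nsmul, ih]

lemma Raux_ker (hDs : D s = 0) :
    ∀ (n : ℕ) (x : B), D x = 0 → Raux D s b n x = n.factorial • (s^n * x) := by
  intro n
  induction n with
  | zero => intro x hx; simp [Raux]
  | succ n ih =>
    intro x hx
    show Raux D s b n (Taux D s b (n+1) x) = (n+1).factorial • (s^(n+1) * x)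
    have hT : Taux D s b (n+1) x = (n+1) • (s * x) := by
      simp [Taux, hx]
    rw [hT, Raux_nsmul]
    have hsx : D (s * x) = 0 := by
      rw [Derivation.leibniz, smul_eq_mul, smul_eq_mul, hDs, hx, mul_zero, mul_zero, add_zero]
    rw [ih (s * x) hsx]
    simp only [nsmul_eq_mul, Nat.factorial_succ]
    push_cast
    ring

/-- Key lemma: if `E` kills `ker D`, and there is `b` with `E b = 0`, `D b ≠ 0`,
`D (D b) = 0`, then `E = 0`. -/
lemma E_eq_zero (D E : Derivation k B B)
    (hDL : IsLocallyNilpotentDeriv D)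
    (hcomm : ∀ y : B, D (E y) = E (D y))
    (hEA : ∀ x : B, D x = 0 → E x = 0)
    (b : B) (hEb : E b = 0) (hDb : D b ≠ 0) (hDDb : D (D b) = 0) :
    ∀ x : B, E x = 0 := by
  set s := D b with hsdef
  have hDs : D s = 0 := hDDb
  have hEs : E s = 0 := hEA s hDs
  have hs : s ≠ 0 := hDb
  have charB : CharZero B := charZero_of_injective_algebraMap (algebraMap k B).injective
  have key : ∀ (n : ℕ) (x : B), D^[n+1] x = 0 → E x = 0 := by
    intro n
    induction n with
    | zero => intro x hx; exact hEA x (by simpa using hx)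
    | succ n ih =>
      intro x hx
      have hDx : E (D x) = 0 := ih (D x) (by rw [← Function.iterate_succ_apply]; exact hx)
      have hDEx : D (E x) = 0 := by rw [hcomm x]; exact hDx
      have h1 : D (Raux D s b (n+1) x) = 0 := Raux_D D s b hDs rfl (n+1) x hx
      have h2 : E (Raux D s b (n+1) x) = 0 := hEA _ h1
      rw [Raux_E D E s b hEs hEb hcomm, Raux_ker D s b hDs (n+1) (E x) hDEx,
        nsmul_eq_mul] at h2
      rcases mul_eq_zero.mp h2 with h | h
      · exact absurd h (by exact_mod_cast Nat.factorial_ne_zero (n+1))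
      rcases mul_eq_zero.mp h with h | h
      · exact absurd h (pow_ne_zero _ hs)
      · exact h
  intro x
  obtain ⟨n, hn⟩ := hDL x
  exact key n x (by rw [Function.iterate_succ_apply', hn, map_zero])

end Aux

/-- If a nonzero locally nilpotent derivation D commutes with a nonzero locally
nilpotent derivation E with a different kernel, then ker D is non-rigid: the
restriction of E to ker D is a nonzero locally nilpotent derivation of ker D. -/
theorem kernel_nonrigid_of_commuting (D E : Derivation k B B) (hD : D ≠ 0) (hE : E ≠ 0)
    (hDL : IsLocallyNilpotentDeriv D) (hEL : IsLocallyNilpotentDeriv E)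
    (hcomm : ∀ b : B, D (E b) = E (D b))
    (hker : D.kerSubalgebra ≠ E.kerSubalgebra) :
    ∃ E' : Derivation k (D.kerSubalgebra) (D.kerSubalgebra),
      (∀ a : D.kerSubalgebra, (E' a : B) = E (a : B)) ∧
      E' ≠ 0 ∧ IsLocallyNilpotentDeriv E' := by
  classical
  have hmap : ∀ a : B, D a = 0 → D (E a) = 0 := fun a ha => by rw [hcomm a, ha, map_zero]
  let E' : Derivation k (D.kerSubalgebra) (D.kerSubalgebra) :=
    { toLinearMap :=
      { toFun := fun a => ⟨E (a : B), hmap _ a.2⟩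
        map_add' := fun a c => by
          apply Subtype.ext
          simp
        map_smul' := fun r a => by
          apply Subtype.ext
          simp }
      map_one_eq_zero' := by
        apply Subtype.ext
        simp
      leibniz' := fun a c => by
        apply Subtype.ext
        simp [Derivation.leibniz, smul_eq_mul] }
  have hE'coe : ∀ a : D.kerSubalgebra, ((E' a : D.kerSubalgebra) : B) = E (a : B) :=
    fun a => rfl
  refine ⟨E', hE'coe, ?_, ?_⟩
  · -- E' ≠ 0
    intro h0
    have hEA : ∀ x : B, D x = 0 → E x = 0 := by
      intro x hx
      have h := DFunLike.congr_fun h0 (⟨x, hx⟩ : D.kerSubalgebra)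
      have := congrArg Subtype.val h
      simpa [hE'coe] using this
    by_cases hc : ∃ c : B, E c = 0 ∧ D c ≠ 0
    · -- get a minimal-degree preslice and derive E = 0
      have hP : ∃ n : ℕ, ∃ d : B, E d = 0 ∧ D d ≠ 0 ∧ D^[n+1] d = 0 := by
        obtain ⟨c, hc1, hc2⟩ := hc
        obtain ⟨m, hm⟩ := hDL c
        exact ⟨m, c, hc1, hc2, by rw [Function.iterate_succ_apply', hm, map_zero]⟩
      obtain ⟨b, hEb, hDb, hnil⟩ := Nat.find_spec hP
      set n₀ := Nat.find hP with hn₀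
      have hDDb : D (D b) = 0 := by
        by_contra hDDb
        rcases Nat.eq_zero_or_pos n₀ with h0' | hpos
        · rw [h0'] at hnil
          simp at hnil
          exact hDb hnil
        · have hPm : ∃ d : B, E d = 0 ∧ D d ≠ 0 ∧ D^[(n₀-1)+1] d = 0 := by
            refine ⟨D b, ?_, hDDb, ?_⟩
            · rw [← hcomm, hEb, map_zero]
            · rw [Nat.sub_add_cancel hpos, ← Function.iterate_succ_apply D n₀ b]
              exact hnil
          exact Nat.find_min hP (Nat.sub_lt hpos one_pos) hPm
      have hall := E_eq_zero D E hDL (fun y => hcomm y) hEA b hEb hDb hDDb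
      apply hE
      ext x
      exact hall x
    · -- kernels are equal, contradiction with hker
      push_neg at hc
      apply hker
      ext x
      exact ⟨fun hx => hEA x hx, fun hx => hc x hx⟩
  · -- local nilpotency
    intro a
    obtain ⟨n, hn⟩ := hEL (a : B)
    refine ⟨n, ?_⟩
    have hco : ∀ (m : ℕ) (c : D.kerSubalgebra), (((⇑E')^[m] c : D.kerSubalgebra) : B) =
        (⇑E)^[m] (c : B) := by
      intro m
      induction m with
      | zero => intro c; rfl
      | succ m ih =>
        intro c
        rw [Function.iterate_succ_apply, Function.iterate_succ_apply, ih, hE'coe]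
    apply Subtype.ext
    rw [hco n a, hn]
    rfl
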